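/- arXiv:1408.2842 — 2 statements merged into one kernel-verified Lean document; each statement's English description precedes it below -/
import Mathlib

section
/- Let φ : A* → M be a monoid homomorphism from the free monoid over a finite alphabet A to a finite aperiodic monoid M. Then for every p ∈ M, the language φ^{-1}(p) = {w ∈ A* : φ(w) = p} is star-free over A. -/
/-- Concatenation of languages: `K · K' = {uv : u ∈ K, v ∈ K'}`. -/
def Lang.cat {α : Type*} (K K' : Set (FreeMonoid α)) : Set (FreeMonoid α) :=
  {w | ∃ u ∈ K, ∃ v ∈ K', w = u * v}

/-- The class `SF(A*)` of star-free languages over the alphabet `A`: the smallest class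
containing `A*` and `{a}` for each letter `a`, closed under union, set difference and
concatenation. -/
inductive SF {A : Type*} : Set (FreeMonoid A) → Prop
  | full : SF Set.univ
  | letter (a : A) : SF {FreeMonoid.of a}
  | union {K K'} : SF K → SF K' → SF (K ∪ K')
  | diff {K K'} : SF K → SF K' → SF (K \ K')
  | concat {K K'} : SF K → SF K' → SF (Lang.cat K K')

/-- A monoid `M` is aperiodic if for every `x ∈ M` there is an `n ∈ ℕ`
with `x ^ n = x ^ (n + 1)`. -/
def Aperiodic (M : Type*) [Monoid M] : Prop :=
  ∀ x : M, ∃ n : ℕ, x ^ n = x ^ (n + 1)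

namespace SFP


lemma sf_empty {A : Type*} : SF (∅ : Set (FreeMonoid A)) := by
  have := SF.diff (A := A) SF.full SF.full
  simpa using this

lemma sf_congr {A : Type*} {K K' : Set (FreeMonoid A)} (h : SF K) (e : K = K') : SF K' := e ▸ h

lemma sf_inter {A : Type*} {K K' : Set (FreeMonoid A)} (h : SF K) (h' : SF K') :
    SF (K ∩ K') := by
  have := SF.diff h (SF.diff h h')
  simpa [Set.diff_diff_right, Set.inter_comm] using this

lemma sf_iUnion {A ι : Type*} [Finite ι] {f : ι → Set (FreeMonoid A)}
    (h : ∀ i, SF (f i)) : SF (⋃ i, f i) := by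
  classical
  cases nonempty_fintype ι
  have e : ⋃ i, f i = ⋃ i ∈ (Finset.univ : Finset ι), f i := by simp
  rw [e]
  induction (Finset.univ : Finset ι) using Finset.induction_on with
  | empty => simpa using sf_empty
  | insert _ _ hx ih =>
      rw [Finset.set_biUnion_insert]
      exact SF.union (h _) ih

/-- image of a star-free language under an injective letter-to-letter map. -/
lemma sf_image {A B : Type*} [Finite B] {f : A → B} (hf : Function.Injective f)
    {L : Set (FreeMonoid A)} (h : SF L) : SF (FreeMonoid.map f '' L) := by
  classical
  induction h with
  | full =>
      have e : (FreeMonoid.map f '' Set.univ)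
          = Set.univ \ ⋃ b : {b : B // b ∉ Set.range f},
              Lang.cat (Lang.cat Set.univ {FreeMonoid.of b.1}) Set.univ := by
        ext w
        simp only [Set.mem_image, Set.mem_univ, true_and, Set.mem_diff, Set.mem_iUnion]
        constructor
        · rintro ⟨v, rfl⟩
          rintro ⟨⟨b, hb⟩, hmem⟩
          obtain ⟨u, ⟨u1, -, u2, hu2, rfl⟩, v2, -, heq⟩ := hmem
          apply hb
          simp only [Set.mem_singleton_iff] at hu2
          subst hu2
          have : b ∈ (FreeMonoid.map f v).toList := by
            rw [heq]
            simp [FreeMonoid.toList_mul]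
          rw [FreeMonoid.toList_map] at this
          obtain ⟨x, -, rfl⟩ := List.mem_map.mp this
          exact ⟨x, rfl⟩
        · intro hw
          -- every letter of w is in range f
          have hall : ∀ b ∈ w.toList, b ∈ Set.range f := by
            intro b hb
            by_contra hbr
            apply hw
            refine ⟨⟨b, hbr⟩, ?_⟩
            obtain ⟨s, t, rfl⟩ := List.append_of_mem hb
            refine ⟨FreeMonoid.ofList s * FreeMonoid.ofList [b], ⟨FreeMonoid.ofList s, trivial,
              FreeMonoid.ofList [b], by simp [FreeMonoid.ofList_singleton], rfl⟩,
              FreeMonoid.ofList t, trivial, ?_⟩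
            show FreeMonoid.ofList (s ++ b :: t) = _
            simp [FreeMonoid.ofList_append, FreeMonoid.ofList_cons, FreeMonoid.ofList_singleton, mul_assoc]
          clear hw
          induction w using FreeMonoid.recOn with
          | one => exact ⟨1, by simp⟩
          | of_mul x xs ih =>
              obtain ⟨y, hy⟩ := hall x (by simp [FreeMonoid.toList_mul, FreeMonoid.toList_of])
              obtain ⟨vs, hvs⟩ := ih (fun b hb => hall b (by simp [FreeMonoid.toList_mul]; right; exact hb))
              exact ⟨FreeMonoid.of y * vs, by rw [map_mul, hvs, FreeMonoid.map_of, hy]⟩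
      rw [e]
      refine SF.diff SF.full (sf_iUnion ?_)
      intro b
      exact SF.concat (SF.concat SF.full (SF.letter b.1)) SF.full
  | letter a =>
      have : FreeMonoid.map f '' {FreeMonoid.of a} = {FreeMonoid.of (f a)} := by
        simp [Set.image_singleton]
      rw [this]; exact SF.letter (f a)
  | union h1 h2 ih1 ih2 => rw [Set.image_union]; exact SF.union ih1 ih2
  | diff h1 h2 ih1 ih2 =>
      have hinj : Function.Injective (FreeMonoid.map f) := by
        intro u v huv
        apply FreeMonoid.toList.injective
        have : (FreeMonoid.map f u).toList = (FreeMonoid.map f v).toList := by rw [huv]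
        rw [FreeMonoid.toList_map, FreeMonoid.toList_map] at this
        exact List.map_injective_iff.mpr hf this
      rw [Set.image_diff hinj]
      exact SF.diff ih1 ih2
  | concat h1 h2 ih1 ih2 =>
      rename_i K K'
      have : FreeMonoid.map f '' Lang.cat K K' = Lang.cat (FreeMonoid.map f '' K) (FreeMonoid.map f '' K') := by
        ext w
        constructor
        · rintro ⟨v, ⟨u1, hu1, u2, hu2, rfl⟩, rfl⟩
          exact ⟨_, ⟨u1, hu1, rfl⟩, _, ⟨u2, hu2, rfl⟩, map_mul _ _ _⟩
        · rintro ⟨v1, ⟨u1, hu1, rfl⟩, v2, ⟨u2, hu2, rfl⟩, rfl⟩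
          exact ⟨u1 * u2, ⟨u1, hu1, u2, hu2, rfl⟩, map_mul _ _ _⟩
      rw [this]; exact SF.concat ih1 ih2



variable {M : Type*} [Monoid M]

/-- The local divisor `cM ∩ Mc` with multiplication `(vc) ∘ (cu) = vcu` and unit `c`. -/
def LD (c : M) : Type _ := {x : M // (∃ u, x = c * u) ∧ (∃ v, x = v * c)}

namespace LD

variable {c : M}

noncomputable def lp (x : LD c) : M := x.2.2.choose

lemma lp_spec (x : LD c) : x.1 = lp x * c := x.2.2.choose_spec

noncomputable instance : Mul (LD c) where
  mul x y := ⟨lp x * y.1, by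
    constructor
    · obtain ⟨u, hu⟩ := y.2.1
      obtain ⟨u0, hu0⟩ := x.2.1
      refine ⟨u0 * u, ?_⟩
      rw [hu, ← mul_assoc, ← lp_spec, hu0, mul_assoc]
    · obtain ⟨v, hv⟩ := y.2.2
      exact ⟨lp x * v, by rw [hv, mul_assoc]⟩⟩

lemma mul_val (x y : LD c) : (x * y).1 = lp x * y.1 := rfl

lemma mul_val' (x y : LD c) {v : M} (hv : x.1 = v * c) : (x * y).1 = v * y.1 := by
  obtain ⟨u, hu⟩ := y.2.1
  rw [mul_val, hu, ← mul_assoc, ← lp_spec, hv, mul_assoc]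

noncomputable instance : Monoid (LD c) where
  one := ⟨c, ⟨1, (mul_one c).symm⟩, ⟨1, (one_mul c).symm⟩⟩
  one_mul x := by
    apply Subtype.ext
    rw [mul_val' (v := 1) _ x (one_mul c).symm, one_mul]
  mul_one x := by
    apply Subtype.ext
    rw [mul_val' _ _ (lp_spec x)]
    show lp x * c = x.1
    rw [← lp_spec]
  mul_assoc x y z := by
    apply Subtype.ext
    have hy : y.1 = lp y * c := lp_spec y
    have hxy : (x * y).1 = (lp x * lp y) * c := by
      rw [mul_val, hy, ← mul_assoc]
    rw [mul_val' _ _ hxy, mul_val x (y * z), mul_val' _ _ hy, mul_assoc]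

lemma one_val : (1 : LD c).1 = c := rfl

lemma pow_succ_val (x : LD c) (n : ℕ) : (x ^ (n + 1) : LD c).1 = (lp x) ^ n * x.1 := by
  induction n with
  | zero => simp
  | succ n ih =>
      have hform : (x ^ (n + 1)).1 = (lp x) ^ (n + 1) * c := by
        rw [ih, lp_spec x, ← mul_assoc, ← pow_succ]
      calc (x ^ (n + 2) : LD c).1 = (x ^ (n+1) * x).1 := by rw [pow_succ]
        _ = (lp x) ^ (n+1) * x.1 := mul_val' _ _ hform

lemma aperiodic (hM : Aperiodic M) : Aperiodic (LD c) := by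
  intro x
  obtain ⟨n, hn⟩ := hM (lp x)
  refine ⟨n + 1, Subtype.ext ?_⟩
  show (x ^ (n+1) : LD c).1 = (x ^ (n+2) : LD c).1
  rw [pow_succ_val, pow_succ_val, hn]

lemma val_ne_one (hM : Aperiodic M) (hc : c ≠ 1) (x : LD c) : x.1 ≠ 1 := by
  intro h1
  obtain ⟨⟨u, hu⟩, ⟨v, hv⟩⟩ := x.2
  rw [h1] at hu hv
  -- c * u = 1 and v * c = 1
  have hvu : v = u := by
    calc v = v * (c * u) := by rw [← hu, mul_one]
      _ = (v * c) * u := by rw [mul_assoc]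
      _ = u := by rw [← hv, one_mul]
  have hcu : c * u = 1 := hu.symm
  have huc : u * c = 1 := by rw [← hvu]; exact hv.symm
  obtain ⟨n, hn⟩ := hM c
  apply hc
  have key : ∀ m : ℕ, u ^ m * c ^ m = 1 := by
    intro m
    induction m with
    | zero => simp
    | succ m ih =>
        calc u ^ (m+1) * c ^ (m+1) = u ^ m * (u * c) * c ^ m := by
              rw [pow_succ, pow_succ']; simp [mul_assoc]
          _ = u ^ m * c ^ m := by rw [huc, mul_one]
          _ = 1 := ih
  calc c = 1 * c := (one_mul c).symm
    _ = (u ^ n * c ^ n) * c := by rw [key n]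
    _ = u ^ n * c ^ (n + 1) := by rw [mul_assoc, ← pow_succ]
    _ = u ^ n * c ^ n := by rw [← hn]
    _ = 1 := key n

lemma card_lt [Finite M] (hM : Aperiodic M) (hc : c ≠ 1) :
    Nat.card (LD c) < Nat.card M := by
  classical
  have h1 : Nat.card (LD c) ≤ Nat.card {x : M // x ≠ 1} := by
    refine Nat.card_le_card_of_injective
      (fun x => (⟨x.1, val_ne_one hM hc x⟩ : {x : M // x ≠ 1})) ?_
    intro x y hxy
    have h := congrArg Subtype.val hxy
    exact Subtype.ext h
  have h2 : Nat.card {x : M // x ≠ 1} < Nat.card M := by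
    have := Fintype.ofFinite M
    rw [Nat.card_eq_fintype_card, Nat.card_eq_fintype_card]
    refine Fintype.card_lt_of_injective_of_notMem (Subtype.val) Subtype.val_injective
      (b := 1) ?_
    rintro ⟨⟨x, hx⟩, rfl⟩
    exact hx rfl
  omega


instance [Finite M] : Finite (LD c) :=
  inferInstanceAs (Finite {x : M // (∃ u, x = c * u) ∧ (∃ v, x = v * c)})

end LD


variable {A M : Type*} [Monoid M]

lemma first_occ_unique {a : A} {u u' t t' : List A} (hu : a ∉ u) (hu' : a ∉ u')
    (h : u ++ a :: t = u' ++ a :: t') : u = u' ∧ t = t' := by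
  induction u generalizing u' with
  | nil =>
      cases u' with
      | nil => simpa using h
      | cons x u' =>
          simp only [List.nil_append, List.cons_append, List.cons.injEq] at h
          exact absurd (List.mem_cons.mpr (Or.inl h.1)) hu'
  | cons x u ih =>
      cases u' with
      | nil =>
          simp only [List.cons_append, List.nil_append, List.cons.injEq] at h
          exact absurd (List.mem_cons.mpr (Or.inl h.1.symm)) hu
      | cons y u' =>
          simp only [List.cons_append, List.cons.injEq] at h
          obtain ⟨rfl, h2⟩ := h
          have := ih (fun hm => hu (List.mem_cons_of_mem _ hm))
            (fun hm => hu' (List.mem_cons_of_mem _ hm)) h2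
          exact ⟨by rw [this.1], this.2⟩

lemma exists_first_occ {a : A} {m : List A} (h : a ∈ m) :
    ∃ u t, a ∉ u ∧ m = u ++ a :: t := by
  induction m with
  | nil => simp at h
  | cons x m ih =>
      by_cases hx : x = a
      · exact ⟨[], m, by simp, by simp [hx]⟩
      · have hm : a ∈ m := by
          rcases List.mem_cons.mp h with h1 | h1
          · exact absurd h1.symm hx
          · exact h1
        obtain ⟨u, t, hu, rfl⟩ := ih hm
        exact ⟨x :: u, t, by
          intro hmem
          rcases List.mem_cons.mp hmem with h1 | h1
          · exact hx h1.symm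
          · exact hu h1, rfl⟩

/-- Factorization of a word `u₀ a u₁ a ⋯ u_{k-1} a` (ending with `a`, each `uᵢ` a-free)
into the list of images `[φ u₀, …, φ u_{k-1}]`. -/
inductive Fac (φ : FreeMonoid A →* M) (a : A) : List A → List M → Prop
  | nil : Fac φ a [] []
  | cons (u t : List A) (γ : List M) : a ∉ u → Fac φ a t γ →
      Fac φ a (u ++ a :: t) (φ (FreeMonoid.ofList u) :: γ)

variable {φ : FreeMonoid A →* M} {a : A}

lemma Fac.eq_nil {m : List A} {γ : List M} (h : Fac φ a m γ) (hm : m = []) : γ = [] := by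
  cases h with
  | nil => rfl
  | cons u t γ hu ht => simp at hm

lemma Fac.cons_inv {m : List A} {γ : List M} (h : Fac φ a m γ) {u t : List A}
    (hm : m = u ++ a :: t) (hu : a ∉ u) :
    ∃ γ', γ = φ (FreeMonoid.ofList u) :: γ' ∧ Fac φ a t γ' := by
  cases h with
  | nil => simp at hm
  | cons u' t' γ' hu' ht' =>
      obtain ⟨rfl, rfl⟩ := first_occ_unique hu' hu hm
      exact ⟨γ', rfl, ht'⟩

lemma Fac.functional {m : List A} {γ γ' : List M} (h : Fac φ a m γ) (h' : Fac φ a m γ') :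
    γ = γ' := by
  induction h generalizing γ' with
  | nil => exact (h'.eq_nil rfl).symm
  | cons u t γ hu ht ih =>
      obtain ⟨δ, rfl, hδ⟩ := h'.cons_inv rfl hu
      rw [ih hδ]

lemma Fac.append {m₁ m₂ : List A} {γ₁ γ₂ : List M}
    (h₁ : Fac φ a m₁ γ₁) (h₂ : Fac φ a m₂ γ₂) : Fac φ a (m₁ ++ m₂) (γ₁ ++ γ₂) := by
  induction h₁ with
  | nil => simpa using h₂
  | cons u t γ hu ht ih =>
      have := Fac.cons u (t ++ m₂) (γ ++ γ₂) hu ih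
      simpa using this

lemma Fac.split {m : List A} {γ₁ γ₂ : List M} (h : Fac φ a m (γ₁ ++ γ₂)) :
    ∃ m₁ m₂, m = m₁ ++ m₂ ∧ Fac φ a m₁ γ₁ ∧ Fac φ a m₂ γ₂ := by
  induction γ₁ generalizing m with
  | nil => exact ⟨[], m, by simp, Fac.nil, by simpa using h⟩
  | cons q γ₁ ih =>
      cases h with
      | cons u t γ hu ht =>
          obtain ⟨m₁, m₂, rfl, hm₁, hm₂⟩ := ih ht
          exact ⟨u ++ a :: m₁, m₂, by simp, Fac.cons u m₁ γ₁ hu hm₁, hm₂⟩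

lemma Fac.ends {m : List A} (h : ∃ γ, Fac φ a m γ) : m = [] ∨ ∃ m', m = m' ++ [a] := by
  obtain ⟨γ, h⟩ := h
  induction h with
  | nil => exact Or.inl rfl
  | cons u t γ hu ht ih =>
      right
      rcases ih with rfl | ⟨m', rfl⟩
      · exact ⟨u, rfl⟩
      · exact ⟨u ++ a :: m', by simp⟩

lemma Fac.total : ∀ (N : ℕ) (m : List A), m.length ≤ N → (m = [] ∨ ∃ m', m = m' ++ [a]) →
    ∃ γ, Fac φ a m γ := by
  intro N
  induction N with
  | zero =>
      intro m hm _
      have : m = [] := List.length_eq_zero_iff.mp (Nat.le_zero.mp hm)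
      exact this ▸ ⟨[], Fac.nil⟩
  | succ N ih =>
      rintro m hm (rfl | ⟨m', rfl⟩)
      · exact ⟨[], Fac.nil⟩
      · have ha : a ∈ m' ++ [a] := by simp
        obtain ⟨u, t, hu, heq⟩ := exists_first_occ ha
        have ht : t = [] ∨ ∃ t', t = t' ++ [a] := by
          rcases List.eq_nil_or_concat t with rfl | ⟨t', b, rfl⟩
          · exact Or.inl rfl
          · right
            refine ⟨t', ?_⟩
            have h2 : m' ++ [a] = (u ++ a :: t') ++ [b] := by
              rw [heq]; simp
            have h3 := (List.append_inj' h2 rfl).2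
            simp only [List.cons.injEq] at h3
            rw [List.concat_eq_append, h3.1]
        have hlen : t.length ≤ N := by
          have h1 := congrArg List.length heq
          simp at h1
          simp at hm
          omega
        obtain ⟨γ, hγ⟩ := ih t hlen ht
        exact ⟨φ (FreeMonoid.ofList u) :: γ, heq ▸ Fac.cons u t γ hu hγ⟩


lemma Fac.nil_of {m : List A} (h : Fac φ a m []) : m = [] := by
  cases h; rfl

lemma Fac.singleton_inv {m : List A} {b : M} (h : Fac φ a m [b]) :
    ∃ u, a ∉ u ∧ φ (FreeMonoid.ofList u) = b ∧ m = u ++ [a] := by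
  cases h with
  | cons u t γ hu ht =>
      exact ⟨u, hu, rfl, by rw [ht.nil_of]⟩



section PsiFac

variable {A M : Type*} [Monoid M]


/-- `ψ : M* → M_c` sending the letter `q` to `cqc`. -/
noncomputable def psi (φ : FreeMonoid A →* M) (a : A) :
    FreeMonoid M →* LD (φ (FreeMonoid.of a)) :=
  FreeMonoid.lift (fun q =>
    ⟨φ (FreeMonoid.of a) * q * φ (FreeMonoid.of a),
      ⟨q * φ (FreeMonoid.of a), by rw [mul_assoc]⟩, ⟨φ (FreeMonoid.of a) * q, rfl⟩⟩)

variable (φ : FreeMonoid A →* M) (a : A)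

lemma psi_of (q : M) : (psi φ a (FreeMonoid.of q)).1
    = φ (FreeMonoid.of a) * q * φ (FreeMonoid.of a) := by
  exact congrArg Subtype.val (FreeMonoid.lift_eval_of (M := LD (φ (FreeMonoid.of a))) _ q)

lemma fac_val {m : List A} {γ : List M} (h : Fac φ a m γ) :
    (psi φ a (FreeMonoid.ofList γ)).1 = φ (FreeMonoid.of a) * φ (FreeMonoid.ofList m) := by
  induction h with
  | nil =>
      show (psi φ a (FreeMonoid.ofList [])).1 = _
      rw [FreeMonoid.ofList_nil, map_one, LD.one_val, FreeMonoid.ofList_nil, map_one, mul_one]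
  | cons u t γ hu ht ih =>
      rw [FreeMonoid.ofList_cons, map_mul,
        LD.mul_val' _ _ (psi_of φ a (φ (FreeMonoid.ofList u))), ih]
      simp [FreeMonoid.ofList_append, FreeMonoid.ofList_cons, map_mul, mul_assoc]

end PsiFac

section Main

variable {A M : Type*} [Finite A] [Monoid M] [Finite M]
variable (φ : FreeMonoid A →* M) (a : A)


/-- the languages of `a`-free words with a given image -/
def Kq (q : M) : Set (FreeMonoid A) := {w | a ∉ FreeMonoid.toList w ∧ φ w = q}

/-- the language `G_x` of middle parts -/
def Gx (x : LD (φ (FreeMonoid.of a))) : Set (FreeMonoid A) :=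
  {m | ∃ γ : List M, psi φ a (FreeMonoid.ofList γ) = x ∧ Fac φ a (FreeMonoid.toList m) γ}

lemma G_sf (hK : ∀ q : M, SF (Kq φ a q)) {P : Set (FreeMonoid M)} (hP : SF P) :
    SF {m : FreeMonoid A | ∃ γ : List M, FreeMonoid.ofList γ ∈ P ∧ Fac φ a (FreeMonoid.toList m) γ} := by
  classical
  induction hP with
  | full =>
      have e : {m : FreeMonoid A | ∃ γ : List M, FreeMonoid.ofList γ ∈ Set.univ ∧
            Fac φ a (FreeMonoid.toList m) γ}
          = Set.univ \ ⋃ b : {b : A // b ≠ a}, Lang.cat Set.univ {FreeMonoid.of b.1} := by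
        ext m
        simp only [Set.mem_setOf_eq, Set.mem_univ, true_and, Set.mem_diff, Set.mem_iUnion]
        constructor
        · rintro ⟨γ, hγ⟩
          rintro ⟨⟨b, hb⟩, u, -, v, hv, rfl⟩
          simp only [Set.mem_singleton_iff] at hv
          subst hv
          rcases Fac.ends ⟨γ, hγ⟩ with hnil | ⟨m', hm'⟩
          · simp [FreeMonoid.toList_mul, FreeMonoid.toList_of] at hnil
          · rw [FreeMonoid.toList_mul, FreeMonoid.toList_of] at hm'
            have := (List.append_inj' hm' rfl).2
            simp only [List.cons.injEq] at this
            exact hb this.1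
        · intro hm
          apply Fac.total (FreeMonoid.toList m).length _ le_rfl
          rcases List.eq_nil_or_concat (FreeMonoid.toList m) with hnil | ⟨s, b, hsb⟩
          · exact Or.inl hnil
          · right
            refine ⟨s, ?_⟩
            rw [hsb, List.concat_eq_append]
            by_cases hba : b = a
            · rw [hba]
            · exfalso
              apply hm
              refine ⟨⟨b, hba⟩, FreeMonoid.ofList s, trivial, FreeMonoid.of b, rfl, ?_⟩
              apply FreeMonoid.toList.injective
              rw [hsb]
              simp [FreeMonoid.toList_mul, List.concat_eq_append]
      rw [e]
      exact SF.diff SF.full (sf_iUnion fun b => SF.concat SF.full (SF.letter b.1))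
  | letter b =>
      have e : {m : FreeMonoid A | ∃ γ : List M, FreeMonoid.ofList γ ∈ ({FreeMonoid.of b} : Set (FreeMonoid M)) ∧
            Fac φ a (FreeMonoid.toList m) γ}
          = Lang.cat (Kq φ a b) {FreeMonoid.of a} := by
        ext m
        simp only [Set.mem_setOf_eq, Set.mem_singleton_iff]
        constructor
        · rintro ⟨γ, hγ, hf⟩
          have hγb : γ = [b] := by
            apply FreeMonoid.ofList.injective
            rw [hγ]; rfl
          subst hγb
          obtain ⟨u, hu, hφu, hm⟩ := Fac.singleton_inv hf
          refine ⟨FreeMonoid.ofList u, ⟨by simpa using hu, by simpa using hφu⟩,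
            FreeMonoid.of a, rfl, ?_⟩
          apply FreeMonoid.toList.injective
          rw [hm]; simp [FreeMonoid.toList_mul]
        · rintro ⟨u, ⟨hu, hφu⟩, v, hv, rfl⟩
          simp only [Set.mem_singleton_iff] at hv
          subst hv
          refine ⟨[φ u], by rw [← hφu]; rfl, ?_⟩
          have := Fac.cons (φ := φ) (a := a) (FreeMonoid.toList u) [] [] hu Fac.nil
          rw [FreeMonoid.toList_mul, FreeMonoid.toList_of]
          simpa using this
      rw [e]
      exact SF.concat (hK b) (SF.letter a)
  | union h1 h2 ih1 ih2 =>
      rename_i P Q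
      have e : {m : FreeMonoid A | ∃ γ : List M, FreeMonoid.ofList γ ∈ P ∪ Q ∧ Fac φ a (FreeMonoid.toList m) γ}
          = {m | ∃ γ : List M, FreeMonoid.ofList γ ∈ P ∧ Fac φ a (FreeMonoid.toList m) γ}
          ∪ {m | ∃ γ : List M, FreeMonoid.ofList γ ∈ Q ∧ Fac φ a (FreeMonoid.toList m) γ} := by
        ext m
        constructor
        · rintro ⟨γ, hγ | hγ, hf⟩
          · exact Or.inl ⟨γ, hγ, hf⟩
          · exact Or.inr ⟨γ, hγ, hf⟩
        · rintro (⟨γ, hγ, hf⟩ | ⟨γ, hγ, hf⟩)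
          · exact ⟨γ, Or.inl hγ, hf⟩
          · exact ⟨γ, Or.inr hγ, hf⟩
      rw [e]; exact SF.union ih1 ih2
  | diff h1 h2 ih1 ih2 =>
      rename_i P Q
      have e : {m : FreeMonoid A | ∃ γ : List M, FreeMonoid.ofList γ ∈ P \ Q ∧ Fac φ a (FreeMonoid.toList m) γ}
          = {m | ∃ γ : List M, FreeMonoid.ofList γ ∈ P ∧ Fac φ a (FreeMonoid.toList m) γ}
          \ {m | ∃ γ : List M, FreeMonoid.ofList γ ∈ Q ∧ Fac φ a (FreeMonoid.toList m) γ} := by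
        ext m
        constructor
        · rintro ⟨γ, ⟨hγP, hγQ⟩, hf⟩
          refine ⟨⟨γ, hγP, hf⟩, ?_⟩
          rintro ⟨γ', hγ', hf'⟩
          exact hγQ (by rwa [Fac.functional hf hf'])
        · rintro ⟨⟨γ, hγP, hf⟩, hnot⟩
          exact ⟨γ, ⟨hγP, fun hγQ => hnot ⟨γ, hγQ, hf⟩⟩, hf⟩
      rw [e]; exact SF.diff ih1 ih2
  | concat h1 h2 ih1 ih2 =>
      rename_i P Q
      have e : {m : FreeMonoid A | ∃ γ : List M, FreeMonoid.ofList γ ∈ Lang.cat P Q ∧ Fac φ a (FreeMonoid.toList m) γ}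
          = Lang.cat {m | ∃ γ : List M, FreeMonoid.ofList γ ∈ P ∧ Fac φ a (FreeMonoid.toList m) γ}
              {m | ∃ γ : List M, FreeMonoid.ofList γ ∈ Q ∧ Fac φ a (FreeMonoid.toList m) γ} := by
        ext m
        constructor
        · rintro ⟨γ, ⟨γ₁, hγ₁, γ₂, hγ₂, hγ⟩, hf⟩
          have hγl : γ = FreeMonoid.toList γ₁ ++ FreeMonoid.toList γ₂ := by
            have := congrArg FreeMonoid.toList hγ
            simpa [FreeMonoid.toList_mul] using this
          rw [hγl] at hf
          obtain ⟨m₁, m₂, hm, hf₁, hf₂⟩ := Fac.split hf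
          refine ⟨FreeMonoid.ofList m₁, ⟨FreeMonoid.toList γ₁, by simpa using hγ₁, by simpa using hf₁⟩,
            FreeMonoid.ofList m₂, ⟨FreeMonoid.toList γ₂, by simpa using hγ₂, by simpa using hf₂⟩, ?_⟩
          apply FreeMonoid.toList.injective
          rw [hm]; simp [FreeMonoid.toList_mul]
        · rintro ⟨m₁, ⟨γ₁, hγ₁, hf₁⟩, m₂, ⟨γ₂, hγ₂, hf₂⟩, rfl⟩
          refine ⟨γ₁ ++ γ₂, ⟨FreeMonoid.ofList γ₁, hγ₁, FreeMonoid.ofList γ₂, hγ₂,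
            (FreeMonoid.ofList_append γ₁ γ₂)⟩, ?_⟩
          rw [FreeMonoid.toList_mul]
          exact Fac.append hf₁ hf₂
      rw [e]; exact SF.concat ih1 ih2


lemma exists_last (a : A) (rest : List A) :
    ∃ mid uk, rest = mid ++ uk ∧ a ∉ uk ∧ (mid = [] ∨ ∃ m', mid = m' ++ [a]) := by
  induction rest with
  | nil => exact ⟨[], [], rfl, by simp, Or.inl rfl⟩
  | cons x t ih =>
      obtain ⟨mid, uk, rfl, huk, hsp⟩ := ih
      rcases hsp with rfl | ⟨m', rfl⟩
      · by_cases hx : x = a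
        · subst hx
          exact ⟨[x], uk, by simp, huk, Or.inr ⟨[], by simp⟩⟩
        · refine ⟨[], x :: uk, by simp, ?_, Or.inl rfl⟩
          intro h
          rcases List.mem_cons.mp h with h1 | h1
          · exact hx h1.symm
          · exact huk h1
      · exact ⟨x :: (m' ++ [a]), uk, by simp, huk, Or.inr ⟨x :: m', by simp⟩⟩

lemma key (hK : ∀ q : M, SF (Kq φ a q))
    (hG : ∀ x : LD (φ (FreeMonoid.of a)), SF (Gx φ a x)) (p : M) :
    SF {w : FreeMonoid A | φ w = p} := by
  classical
  have e : {w : FreeMonoid A | φ w = p} = Kq φ a p ∪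
      ⋃ t : {t : M × LD (φ (FreeMonoid.of a)) × M // t.1 * t.2.1.1 * t.2.2 = p},
        Lang.cat (Lang.cat (Lang.cat (Kq φ a t.1.1) {FreeMonoid.of a}) (Gx φ a t.1.2.1))
          (Kq φ a t.1.2.2) := by
    ext w
    constructor
    · intro hw
      simp only [Set.mem_setOf_eq] at hw
      by_cases ha : a ∈ FreeMonoid.toList w
      · right
        obtain ⟨u, rest, hu, hsplit⟩ := exists_first_occ ha
        obtain ⟨mid, uk, rfl, huk, hsp⟩ := exists_last a rest
        obtain ⟨γ, hγ⟩ := Fac.total (φ := φ) (a := a) mid.length mid le_rfl hsp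
        have hval := fac_val φ a hγ
        have hw' : w = FreeMonoid.ofList u * FreeMonoid.of a * FreeMonoid.ofList mid
            * FreeMonoid.ofList uk := by
          apply FreeMonoid.toList.injective
          rw [hsplit]
          simp [FreeMonoid.toList_mul]
        have hφ : φ (FreeMonoid.ofList u) * (psi φ a (FreeMonoid.ofList γ)).1
            * φ (FreeMonoid.ofList uk) = p := by
          rw [hval, ← hw, hw']
          simp [map_mul, mul_assoc]
        refine Set.mem_iUnion.mpr
          ⟨⟨(φ (FreeMonoid.ofList u), psi φ a (FreeMonoid.ofList γ), φ (FreeMonoid.ofList uk)), hφ⟩, ?_⟩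
        refine ⟨FreeMonoid.ofList u * FreeMonoid.of a * FreeMonoid.ofList mid,
          ⟨FreeMonoid.ofList u * FreeMonoid.of a,
            ⟨FreeMonoid.ofList u, ⟨by simpa using hu, rfl⟩, FreeMonoid.of a, rfl, rfl⟩,
            FreeMonoid.ofList mid, ⟨γ, rfl, by simpa using hγ⟩, rfl⟩,
          FreeMonoid.ofList uk, ⟨by simpa using huk, rfl⟩, hw'⟩
      · exact Or.inl ⟨ha, hw⟩
    · rintro (hw | hw)
      · exact hw.2
      · obtain ⟨⟨⟨q, x, s⟩, hqxs⟩, hw⟩ := Set.mem_iUnion.mp hw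
        obtain ⟨u3, ⟨u2, ⟨u1, ⟨hu1a, hu1⟩, v1, hv1, rfl⟩, m2, ⟨γ, hγx, hγf⟩, rfl⟩,
          u4, ⟨hu4a, hu4⟩, rfl⟩ := hw
        simp only [Set.mem_singleton_iff] at hv1
        subst hv1
        dsimp only at hqxs hu1 hγx hu4
        have hx : x.1 = φ (FreeMonoid.of a) * φ m2 := by
          rw [← hγx]
          have := fac_val φ a hγf
          simpa using this
        show φ (u1 * FreeMonoid.of a * m2 * u4) = p
        rw [← hqxs, hx]
        simp [map_mul, hu1, hu4, mul_assoc]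
  rw [e]
  exact SF.union (hK p)
    (sf_iUnion fun t => SF.concat (SF.concat (SF.concat (hK _) (SF.letter a)) (hG _)) (hK _))

end Main

lemma triv_case {A M : Type*} [Monoid M] (φ : FreeMonoid A →* M)
    (h1 : ∀ b : A, φ (FreeMonoid.of b) = 1) (p : M) : SF {w : FreeMonoid A | φ w = p} := by
  classical
  have hall : ∀ w : FreeMonoid A, φ w = 1 := by
    intro w
    induction w using FreeMonoid.recOn with
    | one => exact map_one φ
    | of_mul x xs ih => rw [map_mul, h1, ih, one_mul]
  by_cases hp : p = 1
  · have : {w : FreeMonoid A | φ w = p} = Set.univ := by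
      ext w; simp [hall, hp]
    rw [this]; exact SF.full
  · have : {w : FreeMonoid A | φ w = p} = ∅ := by
      ext w; simp [hall]; intro h; exact hp h.symm
    rw [this]; exact sf_empty

theorem aux : ∀ (n k : ℕ) (A M : Type u) [Finite A] [Monoid M] [Finite M],
    Nat.card M ≤ n → Nat.card A ≤ k → Aperiodic M → ∀ (φ : FreeMonoid A →* M) (p : M),
    SF {w : FreeMonoid A | φ w = p} := by
  intro n
  induction n using Nat.strong_induction_on with
  | _ n IHn =>
  intro k
  induction k with
  | zero =>
      intro A M _ _ _ hn hk hM φ p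
      have hA : IsEmpty A := by
        have h0 : Nat.card A = 0 := Nat.le_zero.mp hk
        rcases Nat.card_eq_zero.mp h0 with h | h
        · exact h
        · exact absurd h (not_infinite_iff_finite.mpr ‹Finite A›)
      exact triv_case φ (fun b => isEmptyElim b) p
  | succ k IHk =>
      intro A M _ _ _ hn hk hM φ p
      classical
      by_cases hall : ∀ b : A, φ (FreeMonoid.of b) = 1
      · exact triv_case φ hall p
      · push_neg at hall
        obtain ⟨a, hc⟩ := hall
        have hK : ∀ q : M, SF (Kq φ a q) := by
          intro q
          have hcard : Nat.card {x : A // x ≠ a} ≤ k := by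
            have h1 : Nat.card {x : A // x ≠ a} < Nat.card A := by
              have := Fintype.ofFinite A
              rw [Nat.card_eq_fintype_card, Nat.card_eq_fintype_card]
              refine Fintype.card_lt_of_injective_of_notMem Subtype.val
                Subtype.val_injective (b := a) ?_
              rintro ⟨⟨x, hx⟩, h⟩
              exact hx h
            omega
          have hIH := IHk {x : A // x ≠ a} M hn hcard hM
            (φ.comp (FreeMonoid.map (Subtype.val : {x : A // x ≠ a} → A))) q
          have himg := sf_image Subtype.val_injective hIH
          have e : FreeMonoid.map (Subtype.val : {x : A // x ≠ a} → A) ''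
              {w | (φ.comp (FreeMonoid.map Subtype.val)) w = q} = Kq φ a q := by
            ext w
            constructor
            · rintro ⟨w', hw', rfl⟩
              refine ⟨?_, hw'⟩
              intro hmem
              rw [FreeMonoid.toList_map] at hmem
              obtain ⟨x, -, hx⟩ := List.mem_map.mp hmem
              exact x.2 hx
            · rintro ⟨haw, hq⟩
              have hlift : ∃ w' : FreeMonoid {x : A // x ≠ a},
                  FreeMonoid.map Subtype.val w' = w := by
                clear hq
                induction w using FreeMonoid.recOn with
                | one => exact ⟨1, by simp⟩
                | of_mul x xs ih =>
                    have hx : x ≠ a := by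
                      intro hxa
                      exact haw (by simp [FreeMonoid.toList_mul, FreeMonoid.toList_of, hxa])
                    obtain ⟨w'', hw''⟩ := ih
                      (fun hmem => haw (by simp [FreeMonoid.toList_mul]; right; exact hmem))
                    exact ⟨FreeMonoid.of ⟨x, hx⟩ * w'', by rw [map_mul, hw'', FreeMonoid.map_of]⟩
              obtain ⟨w', rfl⟩ := hlift
              exact ⟨w', hq, rfl⟩
          rwa [e] at himg
        have hG : ∀ x : LD (φ (FreeMonoid.of a)), SF (Gx φ a x) := by
          intro x
          have hcard := LD.card_lt (c := φ (FreeMonoid.of a)) hM hc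
          have hIH := IHn (Nat.card (LD (φ (FreeMonoid.of a)))) (by omega)
            (Nat.card M) M (LD (φ (FreeMonoid.of a))) le_rfl le_rfl
            (LD.aperiodic hM) (psi φ a) x
          exact G_sf φ a hK hIH
        exact key φ a hK hG p

theorem bridge {A : Type u} {M : Type v} [Finite A] [Monoid M] [Finite M]
    (hM : Aperiodic M) (φ : FreeMonoid A →* M) (p : M) :
    SF {w : FreeMonoid A | φ w = p} := by
  classical
  let e : ULift.{u} M ≃* M := MulEquiv.ulift
  have hMu : Aperiodic (ULift.{u} M) := by
    intro x
    obtain ⟨n, hn⟩ := hM (e x)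
    refine ⟨n, e.injective ?_⟩
    rw [map_pow, map_pow, hn]
  let φ' : FreeMonoid (ULift.{v} A) →* ULift.{u} M :=
    (e.symm.toMonoidHom).comp (φ.comp (FreeMonoid.map ULift.down))
  have h := aux (Nat.card (ULift.{u} M)) (Nat.card (ULift.{v} A))
    (ULift.{v} A) (ULift.{u} M) le_rfl le_rfl hMu φ' (e.symm p)
  have himg := sf_image (f := (ULift.down : ULift.{v} A → A)) ULift.down_injective h
  have hdu : ∀ w : FreeMonoid A,
      FreeMonoid.map ULift.down (FreeMonoid.map (ULift.up : A → ULift.{v} A) w) = w := by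
    intro w
    apply FreeMonoid.toList.injective
    rw [FreeMonoid.toList_map, FreeMonoid.toList_map, List.map_map]
    show List.map id (FreeMonoid.toList w) = _
    exact List.map_id _
  have eq : FreeMonoid.map ULift.down '' {w' | φ' w' = e.symm p}
      = {w : FreeMonoid A | φ w = p} := by
    ext w
    constructor
    · rintro ⟨w', hw', rfl⟩
      have : e.symm (φ (FreeMonoid.map ULift.down w')) = e.symm p := hw'
      exact e.symm.injective this
    · intro hw
      refine ⟨FreeMonoid.map ULift.up w, ?_, hdu w⟩
      show e.symm (φ (FreeMonoid.map ULift.down (FreeMonoid.map ULift.up w))) = e.symm p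
      rw [hdu w, hw]
  rwa [eq] at himg

end SFP

/-- If `φ : A* → M` is a homomorphism to a finite aperiodic monoid, then for every `p ∈ M`
the language `φ⁻¹(p) = {w ∈ A* : φ(w) = p}` is star-free over `A`. -/
theorem preimage_starfree_of_aperiodic {A M : Type*} [Finite A] [Monoid M] [Finite M]
    (hM : Aperiodic M) (φ : FreeMonoid A →* M) (p : M) :
    SF {w : FreeMonoid A | φ w = p} :=
  SFP.bridge hM φ p
end

section
/- Let A be a finite alphabet and L ⊆ A* a star-free language. Then the syntactic monoid Synt(L) = A*/≡_L is aperiodic: for every word u ∈ A* there exists a natural number n such that u^n ≡_L u^{n+1}, i.e., for all p, q ∈ A*, p u^n q ∈ L if and only if p u^{n+1} q ∈ L. -/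
/-- The syntactic congruence of `L ⊆ A*`: `u ≡_L v` iff for all `p, q ∈ A*`,
`p u q ∈ L ↔ p v q ∈ L`.  The syntactic monoid `Synt(L)` is its quotient
`(syntacticCon L).Quotient`. -/
def syntacticCon {A : Type*} (L : Set (FreeMonoid A)) : Con (FreeMonoid A) where
  r u v := ∀ p q : FreeMonoid A, p * u * q ∈ L ↔ p * v * q ∈ L
  iseqv := ⟨fun _ _ _ => Iff.rfl, fun h p q => (h p q).symm,
    fun h h' p q => (h p q).trans (h' p q)⟩
  mul' {w x y z} h h' := by
    intro p q
    have h1 := h' (p * w) q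
    have h2 := h p (z * q)
    simp only [mul_assoc] at h1 h2 ⊢
    exact h1.trans h2

namespace SFaux

variable {α : Type*}

def len (x : FreeMonoid α) : ℕ := x.toList.length

lemma len_mul (x y : FreeMonoid α) : len (x * y) = len x + len y := by
  simp [len, FreeMonoid.toList_mul]

lemma len_pow (x : FreeMonoid α) (n : ℕ) : len (x ^ n) = n * len x := by
  induction n with
  | zero => simp [len, FreeMonoid.toList_one]
  | succ k ih => rw [pow_succ, len_mul, ih]; ring

lemma len_of (a : α) : len (FreeMonoid.of a) = 1 := rfl

lemma len_eq_zero {x : FreeMonoid α} (h : len x = 0) : x = 1 := by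
  apply FreeMonoid.toList.injective
  simpa [len, List.length_eq_zero_iff] using h

lemma split_left {x y w1 w2 : FreeMonoid α} (h : x * y = w1 * w2)
    (hl : len w1 ≤ len x) : ∃ t, x = w1 * t ∧ w2 = t * y := by
  have h' : x.toList ++ y.toList = w1.toList ++ w2.toList := by
    have := congrArg FreeMonoid.toList h
    simpa [FreeMonoid.toList_mul] using this
  rcases List.append_eq_append_iff.mp h' with ⟨a', hc, hb⟩ | ⟨c', hc, hb⟩
  · have ha : a' = [] := by
      have h2 := congrArg List.length hc
      simp only [List.length_append] at h2
      simp only [len] at hl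
      have : a'.length = 0 := by omega
      simpa using this
    subst ha
    refine ⟨1, ?_, ?_⟩
    · have : w1.toList = x.toList := by simpa using hc
      have := FreeMonoid.toList.injective this
      simp [this]
    · have : y.toList = w2.toList := by simpa using hb
      have := FreeMonoid.toList.injective this
      simp [this]
  · refine ⟨FreeMonoid.ofList c', ?_, ?_⟩
    · apply FreeMonoid.toList.injective
      simpa [FreeMonoid.toList_mul] using hc
    · apply FreeMonoid.toList.injective
      simpa [FreeMonoid.toList_mul] using hb

lemma split_right {x y w1 w2 : FreeMonoid α} (h : x * y = w1 * w2)
    (hl : len x ≤ len w1) : ∃ s, w1 = x * s ∧ y = s * w2 := by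
  rcases split_left h.symm hl with ⟨s, h1, h2⟩
  exact ⟨s, h1, h2⟩

lemma decompose (p u q : FreeMonoid α) {a b c : ℕ} (h : a + b = c) :
    p * u ^ c * q = (p * u ^ a) * (u ^ b * q) := by
  subst h; rw [pow_add]; simp [mul_assoc]

lemma assembleL (p u q t y : FreeMonoid α) {a b c : ℕ} (hab : a + b = c)
    (h : u ^ b * q = t * y) : p * u ^ c * q = (p * u ^ a * t) * y := by
  subst hab; rw [pow_add]
  simp only [mul_assoc]
  rw [h]

lemma assembleR (p u q x s : FreeMonoid α) {a b c : ℕ} (hab : a + b = c)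
    (h : p * u ^ a = x * s) : p * u ^ c * q = x * (s * u ^ b * q) := by
  subst hab; rw [pow_add]
  simp only [← mul_assoc]
  rw [h]

theorem good_of_SF {A : Type*} {K : Set (FreeMonoid A)} (h : SF K) :
    ∃ n : ℕ, ∀ (u p q : FreeMonoid A) (m : ℕ), n ≤ m →
      (p * u ^ m * q ∈ K ↔ p * u ^ (m + 1) * q ∈ K) := by
  induction h with
  | full => exact ⟨0, fun _ _ _ _ _ => by simp⟩
  | letter a =>
    refine ⟨2, fun u p q m hm => ?_⟩
    by_cases hu : u = 1
    · subst hu; simp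
    · have hlu : 1 ≤ len u := by
        rcases Nat.eq_zero_or_pos (len u) with h0 | h0
        · exact absurd (len_eq_zero h0) hu
        · exact h0
      have key : ∀ k : ℕ, 2 ≤ k → p * u ^ k * q ∉ ({FreeMonoid.of a} : Set (FreeMonoid A)) := by
        intro k hk hmem
        have hlen := congrArg len (Set.mem_singleton_iff.mp hmem)
        rw [len_mul, len_mul, len_pow, len_of] at hlen
        have h2 : 2 * 1 ≤ k * len u := Nat.mul_le_mul hk hlu
        omega
      constructor
      · intro hmem; exact absurd hmem (key m hm)
      · intro hmem; exact absurd hmem (key (m + 1) (by omega))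
  | union h1 h2 ih1 ih2 =>
    obtain ⟨n1, h1⟩ := ih1
    obtain ⟨n2, h2⟩ := ih2
    refine ⟨max n1 n2, fun u p q m hm => ?_⟩
    exact or_congr (h1 u p q m (le_trans (le_max_left _ _) hm))
      (h2 u p q m (le_trans (le_max_right _ _) hm))
  | diff h1 h2 ih1 ih2 =>
    obtain ⟨n1, h1⟩ := ih1
    obtain ⟨n2, h2⟩ := ih2
    refine ⟨max n1 n2, fun u p q m hm => ?_⟩
    exact and_congr (h1 u p q m (le_trans (le_max_left _ _) hm))
      (not_congr (h2 u p q m (le_trans (le_max_right _ _) hm)))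
  | @concat K K' h1 h2 ih1 ih2 =>
    obtain ⟨n1, h1⟩ := ih1
    obtain ⟨n2, h2⟩ := ih2
    refine ⟨n1 + n2 + 1, fun u p q m hm => ?_⟩
    have hlen0 : ∀ (x y : FreeMonoid A) (k : ℕ), p * u ^ k * q = x * y →
        len x + len y = len p + k * len u + len q := by
      intro x y k hxy
      have := congrArg len hxy
      rw [len_mul, len_mul, len_mul, len_pow] at this
      omega
    constructor
    · rintro ⟨x, hx, y, hy, hxy⟩
      by_cases hc : len (p * u ^ n1) ≤ len x
      · have hsplit : x * y = (p * u ^ n1) * (u ^ (m - n1) * q) :=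
          hxy.symm.trans (decompose p u q (by omega : n1 + (m - n1) = m))
        obtain ⟨t, hxt, hw2⟩ := split_left hsplit hc
        have hmem : p * u ^ (n1 + 1) * t ∈ K := (h1 u p t n1 le_rfl).mp (hxt ▸ hx)
        exact ⟨p * u ^ (n1 + 1) * t, hmem, y, hy,
          assembleL p u q t y (by omega : (n1 + 1) + (m - n1) = m + 1) hw2⟩
      · have hc2 : len x ≤ len (p * u ^ (m - n2)) := by
          push_neg at hc
          rw [len_mul, len_pow] at hc ⊢
          have hmul : n1 * len u ≤ (m - n2) * len u :=
            Nat.mul_le_mul_right _ (by omega)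
          omega
        have hsplit : x * y = (p * u ^ (m - n2)) * (u ^ n2 * q) :=
          hxy.symm.trans (decompose p u q (by omega : (m - n2) + n2 = m))
        obtain ⟨s, hw1, hys⟩ := split_right hsplit hc2
        have hyK : s * u ^ n2 * q ∈ K' := by
          rw [mul_assoc]; exact hys ▸ hy
        have hmem : s * u ^ (n2 + 1) * q ∈ K' := (h2 u s q n2 le_rfl).mp hyK
        exact ⟨x, hx, s * u ^ (n2 + 1) * q, hmem,
          assembleR p u q x s (by omega : (m - n2) + (n2 + 1) = m + 1) hw1⟩
    · rintro ⟨x, hx, y, hy, hxy⟩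
      by_cases hc : len (p * u ^ (n1 + 1)) ≤ len x
      · have hsplit : x * y = (p * u ^ (n1 + 1)) * (u ^ (m - n1) * q) :=
          hxy.symm.trans (decompose p u q (by omega : (n1 + 1) + (m - n1) = m + 1))
        obtain ⟨t, hxt, hw2⟩ := split_left hsplit hc
        have hmem : p * u ^ n1 * t ∈ K := (h1 u p t n1 le_rfl).mpr (hxt ▸ hx)
        exact ⟨p * u ^ n1 * t, hmem, y, hy,
          assembleL p u q t y (by omega : n1 + (m - n1) = m) hw2⟩
      · have hc2 : len x ≤ len (p * u ^ (m - n2)) := by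
          push_neg at hc
          rw [len_mul, len_pow] at hc ⊢
          have hmul : (n1 + 1) * len u ≤ (m - n2) * len u :=
            Nat.mul_le_mul_right _ (by omega)
          omega
        have hsplit : x * y = (p * u ^ (m - n2)) * (u ^ (n2 + 1) * q) :=
          hxy.symm.trans (decompose p u q (by omega : (m - n2) + (n2 + 1) = m + 1))
        obtain ⟨s, hw1, hys⟩ := split_right hsplit hc2
        have hyK : s * u ^ (n2 + 1) * q ∈ K' := by
          rw [mul_assoc]; exact hys ▸ hy
        have hmem : s * u ^ n2 * q ∈ K' := (h2 u s q n2 le_rfl).mpr hyK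
        exact ⟨x, hx, s * u ^ n2 * q, hmem,
          assembleR p u q x s (by omega : (m - n2) + n2 = m) hw1⟩

end SFaux

/-- If `L ⊆ A*` is star-free, then the syntactic monoid `Synt(L) = A*/≡_L` is aperiodic:
for every `u ∈ A*` there is `n ∈ ℕ` with `uⁿ ≡_L u^{n+1}`, i.e. for all `p, q ∈ A*`,
`p uⁿ q ∈ L ↔ p u^{n+1} q ∈ L`. -/
theorem syntacticMonoid_aperiodic_of_starfree {A : Type*} [Finite A]
    (L : Set (FreeMonoid A)) (hL : SF L) :
    Aperiodic (syntacticCon L).Quotient ∧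
    ∀ u : FreeMonoid A, ∃ n : ℕ, ∀ p q : FreeMonoid A,
      p * u ^ n * q ∈ L ↔ p * u ^ (n + 1) * q ∈ L := by
  obtain ⟨n, hn⟩ := SFaux.good_of_SF hL
  refine ⟨?_, fun u => ⟨n, fun p q => hn u p q n le_rfl⟩⟩
  intro x
  obtain ⟨u, rfl⟩ := Con.mk'_surjective (c := syntacticCon L) x
  refine ⟨n, ?_⟩
  rw [← map_pow, ← map_pow]
  apply (Con.eq _).mpr
  intro p q
  exact hn u p q n le_rfl
end
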